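/- Every nonzero ideal of A is isomorphic, as an A-module, to a fat ideal: for every nonzero ideal F of A there exist an ideal F' of A whose contraction to R is nonzero and an A-module isomorphism F ≅ F'. -/

import Mathlib

open Polynomial

set_option synthInstance.maxHeartbeats 1000000
set_option maxHeartbeats 4000000

/-- The subalgebra `A ≅ ⊕ₙ Lⁿ` of `K[ξ]` attached to a fractional ideal `L` of the
Dedekind domain `R`: polynomials whose `n`-th coefficient lies in `Lⁿ`.  This is the
coordinate ring of the total space of the line bundle on `Spec R` determined by `L`. -/
noncomputable def lineBundleAlgebra (R : Type*) [CommRing R] [IsDomain R] [IsDedekindDomain R]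
    (K : Type*) [Field K] [Algebra R K] [IsFractionRing R K]
    (L : FractionalIdeal (nonZeroDivisors R) K) : Subalgebra R (Polynomial K) where
  carrier := {p : Polynomial K | ∀ n : ℕ, p.coeff n ∈ L ^ n}
  zero_mem' := by
    intro n
    rw [Polynomial.coeff_zero, ← FractionalIdeal.mem_coe]
    exact Submodule.zero_mem _
  add_mem' := by
    intro p q hp hq n
    rw [Polynomial.coeff_add, ← FractionalIdeal.mem_coe]
    exact Submodule.add_mem _ ((FractionalIdeal.mem_coe).mpr (hp n))
      ((FractionalIdeal.mem_coe).mpr (hq n))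
  one_mem' := by
    intro n
    rw [Polynomial.coeff_one]
    split_ifs with h
    · subst h
      rw [pow_zero]
      exact (FractionalIdeal.mem_one_iff _).mpr ⟨1, map_one _⟩
    · rw [← FractionalIdeal.mem_coe]; exact Submodule.zero_mem _
  mul_mem' := by
    intro p q hp hq n
    rw [Polynomial.coeff_mul, ← FractionalIdeal.mem_coe]
    refine Submodule.sum_mem _ fun c hc => ?_
    rw [FractionalIdeal.mem_coe]
    have hcc : c.1 + c.2 = n := Finset.HasAntidiagonal.mem_antidiagonal.mp hc
    have := FractionalIdeal.mul_mem_mul (hp c.1) (hq c.2)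
    rwa [← pow_add, hcc] at this
  algebraMap_mem' := by
    intro r n
    rw [Polynomial.algebraMap_apply, Polynomial.coeff_C]
    split_ifs with h
    · subst h
      rw [pow_zero]
      exact (FractionalIdeal.mem_one_iff _).mpr ⟨r, rfl⟩
    · rw [← FractionalIdeal.mem_coe]; exact Submodule.zero_mem _

set_option linter.unusedSectionVars false

namespace LBAaux

variable {R : Type*} [CommRing R] [IsDomain R] [IsDedekindDomain R]
  {K : Type*} [Field K] [Algebra R K] [IsFractionRing R K]
  {L : FractionalIdeal (nonZeroDivisors R) K}

lemma zero_mem_pow (n : ℕ) : (0 : K) ∈ L ^ n := by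
  rw [← FractionalIdeal.mem_coe]; exact Submodule.zero_mem _

lemma absorb (r : R) {x : K} {n : ℕ} (hx : x ∈ L ^ n) :
    algebraMap R K r * x ∈ L ^ n := by
  have := Submodule.smul_mem ((L ^ n : FractionalIdeal (nonZeroDivisors R) K) :
    Submodule R K) r (FractionalIdeal.mem_coe.mpr hx)
  rwa [Algebra.smul_def, FractionalIdeal.mem_coe] at this

lemma exists_ne_zero_mem (hL : L ≠ 0) : ∃ y, y ∈ L ∧ y ≠ 0 := by
  have : (L : Submodule R K) ≠ ⊥ := fun h =>
    hL (FractionalIdeal.coeToSubmodule_eq_bot.mp h)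
  obtain ⟨y, hy, h0⟩ := (Submodule.ne_bot_iff _).mp this
  exact ⟨y, FractionalIdeal.mem_coe.mp hy, h0⟩

lemma pow_mem_pow {y : K} (hy : y ∈ L) (n : ℕ) : y ^ n ∈ L ^ n := by
  rw [← FractionalIdeal.mem_coe, FractionalIdeal.coe_pow]
  exact Submodule.pow_mem_pow _ (FractionalIdeal.mem_coe.mpr hy) n

lemma exists_clear (hL : L ≠ 0) (x : K) (n : ℕ) :
    ∃ c : R, c ≠ 0 ∧ algebraMap R K c * x ∈ L ^ n := by
  obtain ⟨y, hyL, hy0⟩ := exists_ne_zero_mem hL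
  have hyn : y ^ n ∈ L ^ n := pow_mem_pow hyL n
  obtain ⟨b₂, z₀, hz₀⟩ := IsLocalization.exists_integer_multiple (nonZeroDivisors R) (y ^ n)
  obtain ⟨b₁, w, hw⟩ := IsLocalization.exists_integer_multiple (nonZeroDivisors R) x
  have hb2 : algebraMap R K (b₂ : R) ≠ 0 :=
    IsFractionRing.to_map_ne_zero_of_mem_nonZeroDivisors b₂.2
  refine ⟨z₀ * (b₁ : R), mul_ne_zero ?_ (nonZeroDivisors.ne_zero b₁.2), ?_⟩
  · rintro rfl
    rw [map_zero] at hz₀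
    exact (mul_ne_zero hb2 (pow_ne_zero n hy0)) (by rw [← Algebra.smul_def, ← hz₀])
  · have hx' : algebraMap R K (b₁ : R) * x = algebraMap R K w := by
      have h := hw.symm; rwa [Algebra.smul_def] at h
    have : algebraMap R K (z₀ * (b₁ : R)) * x = algebraMap R K w * ((b₂ : R) • y ^ n) := by
      rw [map_mul, mul_assoc, hx', ← hz₀]; ring
    rw [this, Algebra.smul_def]
    exact absorb _ (absorb _ hyn)

lemma exists_clear_poly (hL : L ≠ 0) (q : Polynomial K) :
    ∃ c : R, c ≠ 0 ∧ ∀ n, algebraMap R K c * q.coeff n ∈ L ^ n := by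
  choose f hf0 hf using fun n => exists_clear hL (q.coeff n) n
  refine ⟨∏ n ∈ Finset.range (q.natDegree + 1), f n,
    Finset.prod_ne_zero_iff.mpr fun n _ => hf0 n, ?_⟩
  intro n
  by_cases hn : n ≤ q.natDegree
  · have hmem : n ∈ Finset.range (q.natDegree + 1) := Finset.mem_range.mpr (Nat.lt_succ_of_le hn)
    rw [← Finset.mul_prod_erase _ _ hmem, map_mul, mul_comm (algebraMap R K (f n)), mul_assoc]
    exact absorb _ (hf n)
  · rw [Polynomial.coeff_eq_zero_of_natDegree_lt (lt_of_not_ge hn), mul_zero]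
    exact zero_mem_pow n

lemma exists_clear_finset (hL : L ≠ 0) (s : Finset (Polynomial K)) :
    ∃ c : R, c ≠ 0 ∧ ∀ q ∈ s, ∀ n, algebraMap R K c * q.coeff n ∈ L ^ n := by
  classical
  induction s using Finset.induction_on with
  | empty => exact ⟨1, one_ne_zero, by simp⟩
  | @insert q s hq ih =>
    obtain ⟨c₁, hc₁0, hc₁⟩ := ih
    obtain ⟨c₂, hc₂0, hc₂⟩ := exists_clear_poly hL q
    refine ⟨c₁ * c₂, mul_ne_zero hc₁0 hc₂0, ?_⟩
    intro p hp n
    rcases Finset.mem_insert.mp hp with rfl | hp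
    · rw [map_mul, mul_assoc]
      exact absorb _ (hc₂ n)
    · rw [map_mul, mul_comm (algebraMap R K c₁), mul_assoc]
      exact absorb _ (hc₁ p hp n)

lemma monomial_mem {t : K} {n : ℕ} (ht : t ∈ L ^ n) :
    (Polynomial.C t * Polynomial.X ^ n : Polynomial K) ∈ lineBundleAlgebra R K L := by
  intro m
  rw [Polynomial.coeff_C_mul, Polynomial.coeff_X_pow]
  split_ifs with h
  · subst h; simpa using ht
  · rw [mul_zero]; exact zero_mem_pow m

lemma algebra_fg : (lineBundleAlgebra R K L).FG := by
  classical
  obtain ⟨T, hT⟩ : (L : Submodule R K).FG :=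
    FractionalIdeal.fg_of_isNoetherianRing le_rfl L
  refine ⟨T.image (fun t => Polynomial.C t * Polynomial.X), le_antisymm ?_ ?_⟩
  · rw [Algebra.adjoin_le_iff]
    rintro p hp
    simp only [Finset.coe_image, Set.mem_image, Finset.mem_coe] at hp
    obtain ⟨t, ht, rfl⟩ := hp
    have htL : t ∈ L := by
      rw [← FractionalIdeal.mem_coe, ← hT]
      exact Submodule.subset_span ht
    have := monomial_mem (L := L) (n := 1) (by rwa [pow_one])
    simpa using this
  · intro p hp
    set S : Set (Polynomial K) := ↑(T.image (fun t => Polynomial.C t * Polynomial.X)) with hS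
    have base : ∀ y : K, y ∈ (L : Submodule R K) →
        Polynomial.C y * Polynomial.X ∈ Algebra.adjoin R S := by
      intro y hy
      rw [← hT] at hy
      induction hy using Submodule.span_induction with
      | mem z hz =>
        exact Algebra.subset_adjoin (by
          simp only [hS, Finset.coe_image, Set.mem_image, Finset.mem_coe]
          exact ⟨z, hz, rfl⟩)
      | zero => rw [Polynomial.C_0, zero_mul]; exact zero_mem _
      | add a b _ _ iha ihb => rw [Polynomial.C_add, add_mul]; exact add_mem iha ihb
      | smul r a _ iha =>
        have : Polynomial.C (r • a) * Polynomial.X = r • (Polynomial.C a * Polynomial.X) := by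
          rw [← Polynomial.smul_C, smul_mul_assoc]
        rw [this]
        exact Subalgebra.smul_mem _ iha r
    have hmono : ∀ (n : ℕ) (t : K), t ∈ L ^ n →
        Polynomial.C t * Polynomial.X ^ n ∈ Algebra.adjoin R S := by
      intro n
      induction n with
      | zero =>
        intro t ht
        rw [pow_zero] at ht
        obtain ⟨r, rfl⟩ := (FractionalIdeal.mem_one_iff _).mp ht
        rw [pow_zero, mul_one, ← Polynomial.algebraMap_apply]
        exact Subalgebra.algebraMap_mem _ r
      | succ n ih =>
        intro t ht
        have ht' : t ∈ ((L ^ n : FractionalIdeal (nonZeroDivisors R) K) : Submodule R K) *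
            (L : Submodule R K) := by
          rw [← FractionalIdeal.coe_mul, ← pow_succ]
          exact FractionalIdeal.mem_coe.mpr ht
        refine Submodule.mul_induction_on ht' (fun x hx y hy => ?_) (fun a b ha hb => ?_)
        · have : Polynomial.C (x * y) * Polynomial.X ^ (n + 1) =
              (Polynomial.C x * Polynomial.X ^ n) * (Polynomial.C y * Polynomial.X) := by
            rw [Polynomial.C_mul]; ring
          rw [this]
          exact mul_mem (ih x (FractionalIdeal.mem_coe.mp hx)) (base y hy)
        · rw [Polynomial.C_add, add_mul]; exact add_mem ha hb
    have hrep := Polynomial.as_sum_range' p (p.natDegree + 1) (Nat.lt_succ_self _)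
    rw [hrep]
    refine Subalgebra.sum_mem _ fun i _ => ?_
    rw [← Polynomial.C_mul_X_pow_eq_monomial]
    exact hmono i _ (hp i)

lemma noetherian : IsNoetherianRing (lineBundleAlgebra R K L) := by
  haveI : Algebra.FiniteType R (lineBundleAlgebra R K L) :=
    (Subalgebra.fg_iff_finiteType _).mp algebra_fg
  exact Algebra.FiniteType.isNoetherianRing R _

end LBAaux

/-- Every nonzero ideal of `A` is isomorphic, as an `A`-module, to a *fat*
ideal, i.e. one whose contraction to `R` is nonzero. -/
theorem every_ideal_isomorphic_to_fat_ideal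
    (R : Type*) [CommRing R] [IsDomain R] [IsDedekindDomain R]
    (K : Type*) [Field K] [Algebra R K] [IsFractionRing R K]
    (L : FractionalIdeal (nonZeroDivisors R) K) (hL : L ≠ 0)
    (A : Subalgebra R (Polynomial K)) (hA : A = lineBundleAlgebra R K L)
    (F : Ideal A) (hF : F ≠ ⊥) :
    ∃ F' : Ideal A, Ideal.comap (algebraMap R A) F' ≠ ⊥ ∧
      Nonempty (F ≃ₗ[A] F') := by
  classical
  subst hA
  obtain ⟨l, hlL, hl0⟩ := LBAaux.exists_ne_zero_mem hL
  obtain ⟨f1, hf1F, hf10⟩ := (Submodule.ne_bot_iff F).mp hF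
  have hf10' : (f1 : Polynomial K) ≠ 0 := fun h => hf10 (Subtype.ext h)
  have hex : ∃ n : ℕ, ∃ f : lineBundleAlgebra R K L, f ∈ F ∧ (f : Polynomial K) ≠ 0 ∧
      (f : Polynomial K).natDegree = n := ⟨_, f1, hf1F, hf10', rfl⟩
  set d := Nat.find hex with hd
  obtain ⟨f₀, hf₀F, hf₀0, hf₀deg⟩ := Nat.find_spec hex
  have hmin : ∀ h : lineBundleAlgebra R K L, h ∈ F → (h : Polynomial K) ≠ 0 →
      d ≤ (h : Polynomial K).natDegree := fun h hh h0 => Nat.find_le ⟨h, hh, h0, rfl⟩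
  have ha0 : (f₀ : Polynomial K).leadingCoeff ≠ 0 := Polynomial.leadingCoeff_ne_zero.mpr hf₀0
  -- every element of F is divisible (in K[X]) by f₀
  have hdvd : ∀ (n : ℕ) (h : lineBundleAlgebra R K L), h ∈ F →
      (h : Polynomial K).natDegree ≤ n → (f₀ : Polynomial K) ∣ (h : Polynomial K) := by
    intro n
    induction n using Nat.strong_induction_on with
    | _ n IH =>
    intro h hhF hdeg
    by_cases h0 : (h : Polynomial K) = 0
    · rw [h0]; exact dvd_zero _
    have hed : d ≤ (h : Polynomial K).natDegree := hmin h hhF h0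
    set e := (h : Polynomial K).natDegree with he
    set k := e - d with hk
    have hkd : k + d = e := Nat.sub_add_cancel hed
    set a := (f₀ : Polynomial K).leadingCoeff with haa
    set b := (h : Polynomial K).leadingCoeff with hbb
    have hb0 : b ≠ 0 := Polynomial.leadingCoeff_ne_zero.mpr h0
    have hla0 : l ^ k * a ≠ 0 := mul_ne_zero (pow_ne_zero _ hl0) ha0
    obtain ⟨⟨r, s⟩, hrs⟩ := IsLocalization.surj (nonZeroDivisors R) (b / (l ^ k * a))
    set sK := algebraMap R K (s : R) with hsK
    set rK := algebraMap R K r with hrK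
    have hsK0 : sK ≠ 0 := IsFractionRing.to_map_ne_zero_of_mem_nonZeroDivisors s.2
    have hrel : sK * b = rK * (l ^ k * a) := by
      rw [div_mul_eq_mul_div, div_eq_iff hla0] at hrs
      rw [mul_comm sK b, hrs]
    have hrK0 : rK ≠ 0 := by
      intro h'
      rw [h', zero_mul] at hrel
      exact (mul_ne_zero hsK0 hb0) hrel
    have hlk : l ^ k ∈ L ^ k := LBAaux.pow_mem_pow hlL k
    set g : lineBundleAlgebra R K L :=
      ⟨Polynomial.C (l ^ k) * Polynomial.X ^ k, LBAaux.monomial_mem hlk⟩ * f₀ with hg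
    have hgF : g ∈ F := Ideal.mul_mem_left _ _ hf₀F
    set h' : lineBundleAlgebra R K L :=
      algebraMap R _ (s : R) * h - algebraMap R _ r * g with hh'
    have hh'F : h' ∈ F :=
      Submodule.sub_mem _ (Ideal.mul_mem_left _ _ hhF) (Ideal.mul_mem_left _ _ hgF)
    have hgcoe : (g : Polynomial K) =
        Polynomial.C (l ^ k) * Polynomial.X ^ k * (f₀ : Polynomial K) := rfl
    have hcoe : (h' : Polynomial K) = Polynomial.C sK * (h : Polynomial K)
        - Polynomial.C rK * (Polynomial.C (l ^ k) * Polynomial.X ^ k * (f₀ : Polynomial K)) := rfl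
    have hvanish : ∀ m : ℕ, e ≤ m → (h' : Polynomial K).coeff m = 0 := by
      intro m hm
      have hkm : k ≤ m := le_trans (by omega) hm
      have hXk : (Polynomial.C (l ^ k) * Polynomial.X ^ k * (f₀ : Polynomial K)).coeff m
          = l ^ k * (f₀ : Polynomial K).coeff (m - k) := by
        rw [mul_assoc, Polynomial.coeff_C_mul]
        congr 1
        have hmk : m = (m - k) + k := (Nat.sub_add_cancel hkm).symm
        conv_lhs => rw [hmk]
        rw [Polynomial.coeff_X_pow_mul]
      rw [hcoe, Polynomial.coeff_sub, Polynomial.coeff_C_mul, Polynomial.coeff_C_mul, hXk]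
      rcases eq_or_lt_of_le hm with heq | hlt
      · have h1 : (h : Polynomial K).coeff m = b := by
          rw [← heq, hbb, he]; exact Polynomial.coeff_natDegree
        have h2 : (f₀ : Polynomial K).coeff (m - k) = a := by
          have hmd : m - k = d := by omega
          rw [hmd, hd, ← hf₀deg, haa]; exact Polynomial.coeff_natDegree
        rw [h1, h2, hrel]; ring
      · have h1 : (h : Polynomial K).coeff m = 0 :=
          Polynomial.coeff_eq_zero_of_natDegree_lt hlt
        have h2 : (f₀ : Polynomial K).coeff (m - k) = 0 := by
          apply Polynomial.coeff_eq_zero_of_natDegree_lt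
          rw [hf₀deg]; omega
        rw [h1, h2]; ring
    have hdeglt : (h' : Polynomial K).degree < (e : ℕ) :=
      (Polynomial.degree_lt_iff_coeff_zero _ _).mpr hvanish
    have hqdvd : (f₀ : Polynomial K) ∣
        Polynomial.C rK * (Polynomial.C (l ^ k) * Polynomial.X ^ k * (f₀ : Polynomial K)) :=
      ⟨Polynomial.C rK * (Polynomial.C (l ^ k) * Polynomial.X ^ k), by ring⟩
    have hstep : (f₀ : Polynomial K) ∣ Polynomial.C sK * (h : Polynomial K) := by
      by_cases h'0 : (h' : Polynomial K) = 0
      · have : Polynomial.C sK * (h : Polynomial K) =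
            Polynomial.C rK * (Polynomial.C (l ^ k) * Polynomial.X ^ k * (f₀ : Polynomial K)) := by
          have h2 := hcoe
          rw [h'0] at h2
          exact sub_eq_zero.mp h2.symm
        rw [this]; exact hqdvd
      · have hlt : (h' : Polynomial K).natDegree < e :=
          (Polynomial.natDegree_lt_iff_degree_lt h'0).mpr hdeglt
        have hdvdh' := IH (h' : Polynomial K).natDegree (lt_of_lt_of_le hlt hdeg) h' hh'F le_rfl
        have : Polynomial.C sK * (h : Polynomial K) = (h' : Polynomial K)
            + Polynomial.C rK * (Polynomial.C (l ^ k) * Polynomial.X ^ k * (f₀ : Polynomial K)) := by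
          rw [hcoe]; ring
        rw [this]
        exact dvd_add hdvdh' hqdvd
    have hu : IsUnit (Polynomial.C sK) := Polynomial.isUnit_C.mpr (isUnit_iff_ne_zero.mpr hsK0)
    exact (hu.dvd_mul_left (a := (f₀ : Polynomial K)) (b := (h : Polynomial K))).mp hstep
  have hdiv : ∀ h : lineBundleAlgebra R K L, h ∈ F → (f₀ : Polynomial K) ∣ (h : Polynomial K) :=
    fun h hh => hdvd _ h hh le_rfl
  haveI : IsNoetherianRing (lineBundleAlgebra R K L) := LBAaux.noetherian
  obtain ⟨S, hS⟩ : F.FG := IsNoetherian.noetherian F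
  obtain ⟨c, hc0, hc⟩ := LBAaux.exists_clear_finset hL
    (S.image (fun g : lineBundleAlgebra R K L => (g : Polynomial K) / (f₀ : Polynomial K)))
  set cK := algebraMap R K c with hcK
  have hcK0 : cK ≠ 0 := fun h => hc0 (IsFractionRing.injective R K (by rw [map_zero]; exact h))
  have hCc0 : Polynomial.C cK ≠ 0 := Polynomial.C_ne_zero.mpr hcK0
  have hq0 : ∀ h : lineBundleAlgebra R K L, (f₀ : Polynomial K) ∣ (h : Polynomial K) →
      (f₀ : Polynomial K) * ((h : Polynomial K) / (f₀ : Polynomial K)) = (h : Polynomial K) :=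
    fun h hd => EuclideanDomain.mul_div_cancel' hf₀0 hd
  have hdivadd : ∀ x y : lineBundleAlgebra R K L, x ∈ F → y ∈ F →
      ((x + y : lineBundleAlgebra R K L) : Polynomial K) / (f₀ : Polynomial K)
        = (x : Polynomial K) / (f₀ : Polynomial K) + (y : Polynomial K) / (f₀ : Polynomial K) := by
    intro x y hx hy
    have hdx := hdiv x hx
    have hdy := hdiv y hy
    have hxy : ((x + y : lineBundleAlgebra R K L) : Polynomial K)
        = (x : Polynomial K) + (y : Polynomial K) := rfl
    apply mul_left_cancel₀ hf₀0
    rw [mul_add, hq0 x hdx, hq0 y hdy, hq0 (x + y) (by rw [hxy]; exact dvd_add hdx hdy), hxy]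
  have hdivmul : ∀ (a x : lineBundleAlgebra R K L), x ∈ F →
      ((a * x : lineBundleAlgebra R K L) : Polynomial K) / (f₀ : Polynomial K)
        = (a : Polynomial K) * ((x : Polynomial K) / (f₀ : Polynomial K)) := by
    intro a x hx
    have hdx := hdiv x hx
    have hax : ((a * x : lineBundleAlgebra R K L) : Polynomial K)
        = (a : Polynomial K) * (x : Polynomial K) := rfl
    apply mul_left_cancel₀ hf₀0
    rw [hq0 (a * x) (by rw [hax]; exact Dvd.dvd.mul_left hdx _), hax, mul_left_comm,
      hq0 x hdx]
  have hstar : ∀ h : lineBundleAlgebra R K L, h ∈ F →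
      Polynomial.C cK * ((h : Polynomial K) / (f₀ : Polynomial K)) ∈ lineBundleAlgebra R K L := by
    intro h hhF
    rw [← hS] at hhF
    induction hhF using Submodule.span_induction with
    | mem g hg =>
      intro m
      rw [Polynomial.coeff_C_mul]
      exact hc _ (Finset.mem_image_of_mem _ (Finset.mem_coe.mp hg)) m
    | zero =>
      have h0 : ((0 : lineBundleAlgebra R K L) : Polynomial K) = 0 := rfl
      rw [h0, EuclideanDomain.zero_div, mul_zero]
      exact Subalgebra.zero_mem _
    | add x y hx hy ihx ihy =>
      have hxF : x ∈ F := by rw [← hS]; exact hx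
      have hyF : y ∈ F := by rw [← hS]; exact hy
      rw [hdivadd x y hxF hyF, mul_add]
      exact Subalgebra.add_mem _ ihx ihy
    | smul a x hx ihx =>
      have hxF : x ∈ F := by rw [← hS]; exact hx
      have hax : a • x = a * x := rfl
      rw [hax, hdivmul a x hxF, mul_left_comm]
      exact Subalgebra.mul_mem _ a.2 ihx
  set F' : Ideal (lineBundleAlgebra R K L) :=
    { carrier := {x : lineBundleAlgebra R K L | ∃ h : lineBundleAlgebra R K L, h ∈ F ∧
        (f₀ : Polynomial K) * (x : Polynomial K) = Polynomial.C cK * (h : Polynomial K)},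
      add_mem' := by
        rintro x y ⟨hx, hxF, hxe⟩ ⟨hy, hyF, hye⟩
        refine ⟨hx + hy, Submodule.add_mem _ hxF hyF, ?_⟩
        show (f₀ : Polynomial K) * ((x : Polynomial K) + (y : Polynomial K))
          = Polynomial.C cK * ((hx : Polynomial K) + (hy : Polynomial K))
        rw [mul_add, hxe, hye, mul_add]
      zero_mem' := ⟨0, Submodule.zero_mem _, by simp⟩
      smul_mem' := by
        rintro a x ⟨hx, hxF, hxe⟩
        refine ⟨a * hx, Ideal.mul_mem_left _ _ hxF, ?_⟩
        show (f₀ : Polynomial K) * ((a : Polynomial K) * (x : Polynomial K))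
          = Polynomial.C cK * ((a : Polynomial K) * (hx : Polynomial K))
        rw [mul_left_comm, hxe, mul_left_comm] } with hF'def
  have hmemF' : ∀ x : lineBundleAlgebra R K L, x ∈ F' ↔ ∃ h : lineBundleAlgebra R K L, h ∈ F ∧
      (f₀ : Polynomial K) * (x : Polynomial K) = Polynomial.C cK * (h : Polynomial K) :=
    fun x => Iff.rfl
  refine ⟨F', ?_, ?_⟩
  · have hcF' : algebraMap R (lineBundleAlgebra R K L) c ∈ F' := by
      rw [hmemF']
      refine ⟨f₀, hf₀F, ?_⟩
      have hcoeA : ((algebraMap R (lineBundleAlgebra R K L) c :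
          lineBundleAlgebra R K L) : Polynomial K) = Polynomial.C cK := rfl
      rw [hcoeA, mul_comm]
    exact (Submodule.ne_bot_iff _).mpr ⟨c, Ideal.mem_comap.mpr hcF', hc0⟩
  · have key : ∀ (x : lineBundleAlgebra R K L), x ∈ F →
        (f₀ : Polynomial K) * (Polynomial.C cK * ((x : Polynomial K) / (f₀ : Polynomial K)))
          = Polynomial.C cK * (x : Polynomial K) := fun x hx => by
      rw [mul_left_comm, hq0 x (hdiv x hx)]
    let φ : F →ₗ[lineBundleAlgebra R K L] F' :=
      { toFun := fun x => ⟨⟨Polynomial.C cK * ((x.1 : Polynomial K) / (f₀ : Polynomial K)),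
          hstar x.1 x.2⟩, (hmemF' _).mpr ⟨x.1, x.2, key x.1 x.2⟩⟩,
        map_add' := by
          rintro ⟨x, hx⟩ ⟨y, hy⟩
          apply Subtype.ext; apply Subtype.ext
          show Polynomial.C cK *
              (((x + y : lineBundleAlgebra R K L) : Polynomial K) / (f₀ : Polynomial K))
            = Polynomial.C cK * ((x : Polynomial K) / (f₀ : Polynomial K))
              + Polynomial.C cK * ((y : Polynomial K) / (f₀ : Polynomial K))
          rw [hdivadd x y hx hy, mul_add]
        map_smul' := by
          rintro a ⟨x, hx⟩
          apply Subtype.ext; apply Subtype.ext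
          show Polynomial.C cK *
              (((a * x : lineBundleAlgebra R K L) : Polynomial K) / (f₀ : Polynomial K))
            = (a : Polynomial K) * (Polynomial.C cK * ((x : Polynomial K) / (f₀ : Polynomial K)))
          rw [hdivmul a x hx, mul_left_comm] }
    have hinj : Function.Injective φ := by
      rintro ⟨x, hx⟩ ⟨y, hy⟩ hxy
      apply Subtype.ext; apply Subtype.ext
      have h1 : Polynomial.C cK * ((x : Polynomial K) / (f₀ : Polynomial K))
          = Polynomial.C cK * ((y : Polynomial K) / (f₀ : Polynomial K)) :=
        congrArg (fun z : F' => ((z : lineBundleAlgebra R K L) : Polynomial K)) hxy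
      have h2 := mul_left_cancel₀ hCc0 h1
      have h3 := congrArg (fun z => (f₀ : Polynomial K) * z) h2
      simpa [hq0 x (hdiv x hx), hq0 y (hdiv y hy)] using h3
    have hsurj : Function.Surjective φ := by
      rintro ⟨x, hmem⟩
      obtain ⟨h, hhF, hxe⟩ := (hmemF' x).mp hmem
      refine ⟨⟨h, hhF⟩, ?_⟩
      apply Subtype.ext; apply Subtype.ext
      show Polynomial.C cK * ((h : Polynomial K) / (f₀ : Polynomial K)) = (x : Polynomial K)
      apply mul_left_cancel₀ hf₀0
      rw [key h hhF, hxe]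
    exact ⟨LinearEquiv.ofBijective φ ⟨hinj, hsurj⟩⟩
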